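/- For any real x, t, the inequality (1+ν)·log(1 + (x-y)²/(νσ²)) ≤ (1+ν)·log(1 + (t-y)²/(νσ²)) + m·((x-y)² - (t-y)²) holds with m = (1+ν)/(νσ² + (t-y)²), and the two sides together with their derivatives in x agree at x = t. -/

import Mathlib

theorem log_surrogate_majorize_and_tangent (y ν σ t : ℝ) (hν : 0 < ν) (hσ : 0 < σ) :
    (∀ x : ℝ,
      (1 + ν) * Real.log (1 + (x - y) ^ 2 / (ν * σ ^ 2))
        ≤ (1 + ν) * Real.log (1 + (t - y) ^ 2 / (ν * σ ^ 2))
          + ((1 + ν) / (ν * σ ^ 2 + (t - y) ^ 2)) * ((x - y) ^ 2 - (t - y) ^ 2)) ∧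
    (1 + ν) * Real.log (1 + (t - y) ^ 2 / (ν * σ ^ 2))
        = (1 + ν) * Real.log (1 + (t - y) ^ 2 / (ν * σ ^ 2))
          + ((1 + ν) / (ν * σ ^ 2 + (t - y) ^ 2)) * ((t - y) ^ 2 - (t - y) ^ 2) ∧
    deriv (fun x : ℝ => (1 + ν) * Real.log (1 + (x - y) ^ 2 / (ν * σ ^ 2))) t
        = deriv (fun x : ℝ =>
            (1 + ν) * Real.log (1 + (t - y) ^ 2 / (ν * σ ^ 2))
              + ((1 + ν) / (ν * σ ^ 2 + (t - y) ^ 2)) * ((x - y) ^ 2 - (t - y) ^ 2)) t := by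
  have hc : (0:ℝ) < ν * σ ^ 2 := by positivity
  have hd : (0:ℝ) < ν * σ ^ 2 + (t - y) ^ 2 := by positivity
  have hν1 : (0:ℝ) ≤ 1 + ν := by linarith
  refine ⟨?_, by ring, ?_⟩
  · intro x
    have hax : (0:ℝ) < 1 + (x - y) ^ 2 / (ν * σ ^ 2) := by positivity
    have hat : (0:ℝ) < 1 + (t - y) ^ 2 / (ν * σ ^ 2) := by positivity
    have hlog : Real.log (1 + (x - y) ^ 2 / (ν * σ ^ 2))
        - Real.log (1 + (t - y) ^ 2 / (ν * σ ^ 2))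
        ≤ ((x - y) ^ 2 - (t - y) ^ 2) / (ν * σ ^ 2 + (t - y) ^ 2) := by
      have := Real.log_le_sub_one_of_pos (x := (1 + (x - y) ^ 2 / (ν * σ ^ 2)) /
          (1 + (t - y) ^ 2 / (ν * σ ^ 2))) (by positivity)
      rw [Real.log_div (by positivity) (by positivity)] at this
      have hq : (1 + (x - y) ^ 2 / (ν * σ ^ 2)) / (1 + (t - y) ^ 2 / (ν * σ ^ 2)) - 1
          = ((x - y) ^ 2 - (t - y) ^ 2) / (ν * σ ^ 2 + (t - y) ^ 2) := by
        field_simp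
        ring
      linarith [this, hq ▸ this]
    have := mul_le_mul_of_nonneg_left hlog hν1
    have heq : (1 + ν) * (((x - y) ^ 2 - (t - y) ^ 2) / (ν * σ ^ 2 + (t - y) ^ 2))
        = ((1 + ν) / (ν * σ ^ 2 + (t - y) ^ 2)) * ((x - y) ^ 2 - (t - y) ^ 2) := by
      ring
    nlinarith [this]
  · have hat : (0:ℝ) < 1 + (t - y) ^ 2 / (ν * σ ^ 2) := by positivity
    have h1 : HasDerivAt (fun x : ℝ => 1 + (x - y) ^ 2 / (ν * σ ^ 2))
        (2 * (t - y) / (ν * σ ^ 2)) t := by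
      have : HasDerivAt (fun x : ℝ => x - y) 1 t := (hasDerivAt_id t).sub_const y
      have h2 := (this.pow 2).div_const (ν * σ ^ 2)
      have h3 := (h2.const_add 1)
      simpa using h3
    have hL : HasDerivAt (fun x : ℝ => (1 + ν) * Real.log (1 + (x - y) ^ 2 / (ν * σ ^ 2)))
        ((1 + ν) * (2 * (t - y) / (ν * σ ^ 2) / (1 + (t - y) ^ 2 / (ν * σ ^ 2)))) t :=
      (h1.log (ne_of_gt hat)).const_mul (1 + ν)
    have hR : HasDerivAt (fun x : ℝ =>
        (1 + ν) * Real.log (1 + (t - y) ^ 2 / (ν * σ ^ 2))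
          + ((1 + ν) / (ν * σ ^ 2 + (t - y) ^ 2)) * ((x - y) ^ 2 - (t - y) ^ 2))
        (((1 + ν) / (ν * σ ^ 2 + (t - y) ^ 2)) * (2 * (t - y))) t := by
      have : HasDerivAt (fun x : ℝ => x - y) 1 t := (hasDerivAt_id t).sub_const y
      have h2 := ((this.pow 2).sub_const ((t - y) ^ 2)).const_mul
        ((1 + ν) / (ν * σ ^ 2 + (t - y) ^ 2))
      have h3 := h2.const_add ((1 + ν) * Real.log (1 + (t - y) ^ 2 / (ν * σ ^ 2)))
      simpa [mul_comm, mul_assoc] using h3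
    rw [hL.deriv, hR.deriv]
    field_simp
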